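/- Suppose E = ∅ (the constraints consist only of angle cosines). Then along any solution p : [0, ∞) → χ of the gradient flow ṗ(t) = −R_W(p(t))ᵀ e(p(t)), the quantity ‖p(t) − 1_n ⊗ p°‖ is constant in time, where p° is the (constant) centroid; equivalently, the scale p^s(t) = sqrt((1/n) Σ_{i=1}^n ‖p_i(t) − p°‖²) is invariant for all t ≥ 0. -/

import Mathlib

open scoped RealInnerProductSpace

noncomputable section

/-- A point in `ℝ^d`. -/
abbrev Pt (d : ℕ) : Type := EuclideanSpace ℝ (Fin d)

/-- A configuration of `n` points in `ℝ^d`, identified with `ℝ^{dn}` (Euclidean norm). -/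
abbrev Conf (d n : ℕ) : Type := PiLp 2 (fun _ : Fin n => Pt d)

/-- Cosine of the angle at vertex `k` subtended by vertices `i` and `j`. -/
def cosAngle {d n : ℕ} (p : Conf d n) (k i j : Fin n) : ℝ :=
  ⟪p i - p k, p j - p k⟫ / (‖p i - p k‖ * ‖p j - p k‖)

/-- The set `χ` of admissible configurations for the angle set `A`. -/
def Chi {d n : ℕ} (A : Finset (Fin n × Fin n × Fin n)) : Set (Conf d n) :=
  {p | ∀ a ∈ A, p a.2.1 ≠ p a.1 ∧ p a.2.2 ≠ p a.1}

/-- The weak rigidity function `F_W`. -/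
def FW {d n : ℕ} (E : Finset (Fin n × Fin n)) (A : Finset (Fin n × Fin n × Fin n))
    (p : Conf d n) : EuclideanSpace ℝ (↥E ⊕ ↥A) :=
  WithLp.toLp 2 (fun x => Sum.elim (fun e : ↥E => ‖p e.1.1 - p e.1.2‖ ^ 2)
    (fun a : ↥A => cosAngle p a.1.1 a.1.2.1 a.1.2.2) x)

/-- The weak rigidity matrix `R_W(p)`: Jacobian (Fréchet derivative) of `F_W` at `p`. -/
def RW {d n : ℕ} (E : Finset (Fin n × Fin n)) (A : Finset (Fin n × Fin n × Fin n))
    (p : Conf d n) : Conf d n →L[ℝ] EuclideanSpace ℝ (↥E ⊕ ↥A) :=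
  fderiv ℝ (FW E A) p

/-- Rank of the weak rigidity matrix. -/
def rankRW {d n : ℕ} (E : Finset (Fin n × Fin n)) (A : Finset (Fin n × Fin n × Fin n))
    (p : Conf d n) : ℕ :=
  Module.finrank ℝ ↥(LinearMap.range (RW E A p).toLinearMap)

/-- `J` is skew-symmetric. -/
def IsSkewAdj {d : ℕ} (J : Pt d →ₗ[ℝ] Pt d) : Prop :=
  ∀ x y : Pt d, ⟪J x, y⟫ = - ⟪x, J y⟫

/-- Trivial infinitesimal motions (translations and rotations). -/
def trivialMotions {d n : ℕ} (p : Conf d n) : Set (Conf d n) :=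
  {δ | ∃ (v : Pt d) (J : Pt d →ₗ[ℝ] Pt d), IsSkewAdj J ∧ ∀ i, δ i = v + J (p i)}

/-- Trivial infinitesimal motions including scaling. -/
def trivialMotionsScale {d n : ℕ} (p : Conf d n) : Set (Conf d n) :=
  {δ | ∃ (v : Pt d) (J : Pt d →ₗ[ℝ] Pt d) (c : ℝ),
    IsSkewAdj J ∧ ∀ i, δ i = v + J (p i) + c • p i}

/-- Congruence of two configurations. -/
def ConfCongruent {d n : ℕ} (p q : Conf d n) : Prop :=
  ∀ i j, ‖q i - q j‖ = ‖p i - p j‖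

/-- Proportional congruence of two configurations. -/
def PropCongruent {d n : ℕ} (p q : Conf d n) : Prop :=
  ∃ C : ℝ, 0 < C ∧ ∀ i j, ‖q i - q j‖ = C * ‖p i - p j‖

/-- Generalized weak rigidity (case `E ≠ ∅`). -/
def IsGWR {d n : ℕ} (E : Finset (Fin n × Fin n)) (A : Finset (Fin n × Fin n × Fin n))
    (p : Conf d n) : Prop :=
  ∃ U ∈ nhds p, U ⊆ Chi A ∧ ∀ q ∈ U, FW E A q = FW E A p → ConfCongruent p q

/-- Generalized weak rigidity (case `E = ∅`, up to scaling). -/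
def IsGWRScale {d n : ℕ} (E : Finset (Fin n × Fin n)) (A : Finset (Fin n × Fin n × Fin n))
    (p : Conf d n) : Prop :=
  ∃ U ∈ nhds p, U ⊆ Chi A ∧ ∀ q ∈ U, FW E A q = FW E A p → PropCongruent p q

/-- `p` is a regular point of `F_W`: its rank attains the maximum over `χ`. -/
def IsRegularPt {d n : ℕ} (E : Finset (Fin n × Fin n)) (A : Finset (Fin n × Fin n × Fin n))
    (p : Conf d n) : Prop :=
  p ∈ Chi A ∧ ∀ q ∈ (Chi A : Set (Conf d n)), rankRW E A q ≤ rankRW E A p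

/-- The gradient-flow vector field `u(p) = -R_W(p)ᵀ (F_W(p) - c)`. -/
def gradFlowVF {d n : ℕ} (E : Finset (Fin n × Fin n)) (A : Finset (Fin n × Fin n × Fin n))
    (c : EuclideanSpace ℝ (↥E ⊕ ↥A)) (p : Conf d n) : Conf d n :=
  -(ContinuousLinearMap.adjoint (RW E A p)) (FW E A p - c)

set_option synthInstance.maxHeartbeats 400000 in
set_option maxHeartbeats 1000000 in
/-- `p : [0,∞) → χ` is a solution of the gradient flow `ṗ = -R_W(p)ᵀ e(p)`. -/
def IsGradFlowSol {d n : ℕ} (E : Finset (Fin n × Fin n)) (A : Finset (Fin n × Fin n × Fin n))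
    (c : EuclideanSpace ℝ (↥E ⊕ ↥A)) (p : ℝ → Conf d n) : Prop :=
  (∀ t : ℝ, 0 ≤ t → p t ∈ Chi A) ∧
  ∀ t : ℝ, 0 ≤ t → HasDerivAt p (gradFlowVF E A c (p t)) t

/-- Centroid of a configuration. -/
def centroid {d n : ℕ} (x : Conf d n) : Pt d := (n : ℝ)⁻¹ • ∑ i, x i

end
/-- The configuration `1ₙ ⊗ x`, all of whose points are `x`. -/
def constConf (d n : ℕ) (x : Pt d) : Conf d n := WithLp.toLp 2 (fun _ => x)

/-- Scaling about any fixed point leaves `F_W` invariant when `E = ∅`. -/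
lemma FW_scale_invariant {d n : ℕ} (E : Finset (Fin n × Fin n))
    (A : Finset (Fin n × Fin n × Fin n)) (hE : E = ∅) (p : Conf d n) (v : Pt d)
    (s : ℝ) (hs : -1 < s) :
    FW E A (p + s • (p - constConf d n v)) = FW E A p := by
  ext x
  rcases x with e | a
  · exact absurd e.2 (by simp [hE])
  · have hdiff : ∀ i k : Fin n,
        (p + s • (p - constConf d n v)) i - (p + s • (p - constConf d n v)) k
          = (1 + s) • (p i - p k) := by
      intro i k
      show (p i + s • (p i - v)) - (p k + s • (p k - v)) = (1 + s) • (p i - p k)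
      module
    show cosAngle _ _ _ _ = cosAngle _ _ _ _
    unfold cosAngle
    rw [hdiff, hdiff]
    set x := p a.1.2.1 - p a.1.1
    set y := p a.1.2.2 - p a.1.1
    have h1 : (0:ℝ) < 1 + s := by linarith
    rw [real_inner_smul_left, real_inner_smul_right, norm_smul, norm_smul,
      Real.norm_eq_abs, abs_of_pos h1]
    rw [show (1 + s) * ‖x‖ * ((1 + s) * ‖y‖) = ((1+s)*(1+s)) * (‖x‖ * ‖y‖) by ring,
      show (1 + s) * ((1 + s) * ⟪x, y⟫) = ((1+s)*(1+s)) * ⟪x, y⟫ by ring]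
    exact mul_div_mul_left _ _ (by positivity)

set_option synthInstance.maxHeartbeats 400000 in
set_option maxHeartbeats 1000000 in
/-- The scaling direction is in the kernel of `R_W` when `E = ∅`. -/
lemma RW_scale_dir {d n : ℕ} (E : Finset (Fin n × Fin n))
    (A : Finset (Fin n × Fin n × Fin n)) (hE : E = ∅) (p : Conf d n) (v : Pt d) :
    RW E A p (p - constConf d n v) = 0 := by
  by_cases h : DifferentiableAt ℝ (FW E A) p
  · set w := p - constConf d n v with hw
    have hg : HasDerivAt (fun s : ℝ => p + s • w) w 0 := by
      have : HasDerivAt (fun s : ℝ => s • w) ((1:ℝ) • w) 0 :=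
        (hasDerivAt_id (0:ℝ)).smul_const w
      simpa using this.const_add p
    have hcomp : HasDerivAt (fun s : ℝ => FW E A (p + s • w))
        ((RW E A p) w) 0 := by
      have hfd : HasFDerivAt (FW E A) (fderiv ℝ (FW E A) p) (p + (0:ℝ) • w) := by
        simpa using h.hasFDerivAt
      exact hfd.comp_hasDerivAt 0 hg
    have hconst : HasDerivAt (fun s : ℝ => FW E A (p + s • w))
        (0 : EuclideanSpace ℝ (↥E ⊕ ↥A)) 0 := by
      have hev : (fun s : ℝ => FW E A (p + s • w)) =ᶠ[nhds (0:ℝ)]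
          (fun _ => FW E A p) := by
        filter_upwards [Ioo_mem_nhds (by norm_num : (-1:ℝ) < 0)
          (by norm_num : (0:ℝ) < 1)] with s hs
        exact FW_scale_invariant E A hE p v s hs.1
      exact (hasDerivAt_const 0 (FW E A p)).congr_of_eventuallyEq hev
    exact hcomp.unique hconst
  · simp [RW, fderiv_zero_of_not_differentiableAt h]

set_option synthInstance.maxHeartbeats 2000000 in
set_option maxHeartbeats 4000000 in
/-- if `E = ∅`, then along any solution of the gradient flow the quantity
`‖p(t) − 1ₙ ⊗ p°‖` (Euclidean norm on `ℝ^{dn}`) is constant in time, where `p°` is the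
(constant) centroid; equivalently, the scale is invariant. -/
theorem stmt14 {d n : ℕ} (hd : d = 2 ∨ d = 3) (hn : 3 ≤ n)
    (E : Finset (Fin n × Fin n)) (A : Finset (Fin n × Fin n × Fin n))
    (hE : E = ∅)
    (hA : ∀ a ∈ A, a.1 ≠ a.2.1 ∧ a.1 ≠ a.2.2 ∧ a.2.1 ≠ a.2.2)
    (c : EuclideanSpace ℝ (↥E ⊕ ↥A)) (p : ℝ → Conf d n)
    (hsol : IsGradFlowSol E A c p) :
    ∀ t : ℝ, 0 ≤ t →
      ‖p t - constConf d n (centroid (p 0))‖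
        = ‖p 0 - constConf d n (centroid (p 0))‖ := by
  intro t ht
  set v := centroid (p 0) with hv
  set q := constConf d n v with hq
  have hderiv : ∀ s : ℝ, 0 ≤ s →
      HasDerivAt (fun u : ℝ => ⟪p u - q, p u - q⟫) 0 s := by
    intro s hs
    have h1 := hsol.2 s hs
    have h2 : HasDerivAt (fun u : ℝ => p u - q) (gradFlowVF E A c (p s)) s :=
      h1.sub_const q
    have h3 := h2.inner ℝ h2
    have hz : ⟪gradFlowVF E A c (p s), p s - q⟫ = 0 := by
      rw [gradFlowVF, inner_neg_left, ContinuousLinearMap.adjoint_inner_left,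
        RW_scale_dir E A hE (p s) v, inner_zero_right, neg_zero]
    have hz' : ⟪p s - q, gradFlowVF E A c (p s)⟫ = 0 := by
      rw [real_inner_comm]; exact hz
    simpa [hz, hz'] using h3
  have hconst : ∀ x ∈ Set.Icc (0:ℝ) t,
      ⟪p x - q, p x - q⟫ = ⟪p 0 - q, p 0 - q⟫ := by
    apply constant_of_has_deriv_right_zero
    · intro x hx
      exact (hderiv x hx.1).continuousAt.continuousWithinAt
    · intro x hx
      exact (hderiv x hx.1).hasDerivWithinAt
  have heq := hconst t ⟨ht, le_refl t⟩
  rw [real_inner_self_eq_norm_sq, real_inner_self_eq_norm_sq] at heq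
  have h1 : (0:ℝ) ≤ ‖p t - q‖ := norm_nonneg _
  have h2 : (0:ℝ) ≤ ‖p 0 - q‖ := norm_nonneg _
  nlinarith [heq]
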